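/- Cuntz-Krieger uniqueness: Let G be a locally compact Hausdorff groupoid with totally disconnected unit space such that s is a local homeomorphism, and suppose the set of units u with trivial isotropy (uGu = {u}) is dense in G⁰. If π : A(G) → B is an algebra homomorphism with nonzero kernel, then there exists a nonempty compact open subset K ⊆ G⁰ such that π(1_K) = 0. -/

import Mathlib

open scoped BigOperators

structure EtaleGroupoid (G : Type*) [TopologicalSpace G] where
  r : G → G
  s : G → G
  mul : G → G → G
  inv : G → G
  mul_assoc' : ∀ a b c, s a = r b → s b = r c → mul (mul a b) c = mul a (mul b c)
  r_mul : ∀ a b, s a = r b → r (mul a b) = r a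
  s_mul : ∀ a b, s a = r b → s (mul a b) = s b
  unit_mul : ∀ a, mul (r a) a = a
  mul_unit : ∀ a, mul a (s a) = a
  inv_inv : ∀ a, inv (inv a) = a
  r_inv : ∀ a, r (inv a) = s a
  s_inv : ∀ a, s (inv a) = r a
  mul_inv : ∀ a, mul a (inv a) = r a
  inv_mul : ∀ a, mul (inv a) a = s a
  continuous_r : Continuous r
  continuous_s : Continuous s
  continuous_inv : Continuous inv
  continuous_mul : ContinuousOn (fun p : G × G => mul p.1 p.2) {p : G × G | s p.1 = r p.2}

namespace EtaleGroupoid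

variable {G : Type*} [TopologicalSpace G] (g : EtaleGroupoid G)

/-- The unit space `G⁰`. -/
def unitSpace : Set G := Set.range g.r

/-- A bisection: a subset on which both `r` and `s` are injective. -/
def IsBisection (U : Set G) : Prop := Set.InjOn g.r U ∧ Set.InjOn g.s U

/-- The set-product `UV` of two subsets of `G`. -/
def setMul (U V : Set G) : Set G :=
  {x | ∃ a ∈ U, ∃ b ∈ V, g.s a = g.r b ∧ x = g.mul a b}

/-- The source map is a local homeomorphism (onto its open image). -/
def SourceEtale : Prop :=
  ∀ a : G, ∃ U : Set G, IsOpen U ∧ a ∈ U ∧ Set.InjOn g.s U ∧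
    ∀ V : Set G, V ⊆ U → IsOpen V → IsOpen (g.s '' V)

/-- The unit space is totally disconnected: it has a basis of compact open sets. -/
def UnitBasis : Prop :=
  ∀ u ∈ g.unitSpace, ∀ V : Set G, IsOpen V → u ∈ V →
    ∃ W : Set G, IsCompact W ∧ IsOpen W ∧ u ∈ W ∧ W ⊆ V ∧ W ⊆ g.unitSpace

/-- Convolution of complex functions on `G`. -/
noncomputable def conv (f h : G → ℂ) : G → ℂ :=
  fun γ => ∑ᶠ α ∈ {α : G | g.r α = g.r γ}, f α * h (g.mul (g.inv α) γ)

/-- The involution `f*(γ) = conj (f (γ⁻¹))`. -/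
noncomputable def star' (f : G → ℂ) : G → ℂ := fun γ => (starRingEnd ℂ) (f (g.inv γ))

/-- Indicator function of a set. -/
noncomputable def ind (U : Set G) : G → ℂ := Set.indicator U 1

/-- `c : G → Γ` is a cocycle. -/
def IsCocycle {Γ : Type*} [Group Γ] (c : G → Γ) : Prop :=
  ∀ a b, g.s a = g.r b → c (g.mul a b) = c a * c b

/-- The `n`-graded compact open bisections. -/
def BcoGr {Γ : Type*} (c : G → Γ) (n : Γ) : Set (Set G) :=
  {U | IsCompact U ∧ IsOpen U ∧ g.IsBisection U ∧ ∀ x ∈ U, c x = n}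

/-- All graded compact open bisections. -/
def Bco {Γ : Type*} (c : G → Γ) : Set (Set G) := ⋃ n, g.BcoGr c n

/-- `A(G)`: the locally constant, compactly supported complex functions, as a
submodule of `G → ℂ`. -/
noncomputable def AG : Submodule ℂ (G → ℂ) where
  carrier := {f | IsLocallyConstant f ∧ HasCompactSupport f}
  add_mem' := by
    rintro f h ⟨hf1, hf2⟩ ⟨hh1, hh2⟩
    exact ⟨hf1.comp₂ hh1 (· + ·), hf2.add hh2⟩
  zero_mem' := ⟨IsLocallyConstant.const 0, by
    simp [HasCompactSupport, tsupport]⟩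
  smul_mem' := by
    rintro a f ⟨hf1, hf2⟩
    constructor
    · have h := hf1.comp (fun z : ℂ => a * z)
      have : a • f = (fun z : ℂ => a * z) ∘ f := by
        funext x; simp [Function.comp, smul_eq_mul]
      rwa [this]
    · exact hf2.mono fun x hx => by
        have h : a * f x ≠ 0 := hx
        exact fun h0 => h (by simp [h0])

/-- The I-norm on `C_c(G)`. -/
noncomputable def Inorm (f : G → ℂ) : ℝ :=
  max (⨆ u ∈ g.unitSpace, ∑ᶠ α ∈ {α : G | g.r α = u}, ‖f α‖)
      (⨆ u ∈ g.unitSpace, ∑ᶠ α ∈ {α : G | g.s α = u}, ‖f α‖)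

/-- A representation of the graded compact open bisections in a complex algebra. -/
structure IsRep {Γ : Type*} {B : Type*} [Ring B] [Algebra ℂ B]
    (c : G → Γ) (t : Set G → B) : Prop where
  map_empty : t ∅ = 0
  map_mul : ∀ U V, U ∈ g.Bco c → V ∈ g.Bco c → t U * t V = t (g.setMul U V)
  map_union : ∀ n U V, U ∈ g.BcoGr c n → V ∈ g.BcoGr c n → Disjoint U V →
    g.IsBisection (U ∪ V) → t U + t V = t (U ∪ V)

end EtaleGroupoid
namespace CKaux

open EtaleGroupoid

variable {G : Type*} [TopologicalSpace G] (g : EtaleGroupoid G)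

lemma ck_s_unit {u : G} (hu : u ∈ g.unitSpace) : g.s u = u := by
  obtain ⟨a, rfl⟩ := hu
  have h1 : g.s (g.mul a (g.inv a)) = g.s (g.inv a) := g.s_mul _ _ (g.r_inv a).symm
  rw [g.mul_inv, g.s_inv] at h1
  exact h1

lemma ck_r_unit {u : G} (hu : u ∈ g.unitSpace) : g.r u = u := by
  obtain ⟨a, rfl⟩ := hu
  have h1 : g.r (g.mul a (g.inv a)) = g.r a := g.r_mul _ _ (g.r_inv a).symm
  rwa [g.mul_inv] at h1

lemma ck_s_mem (a : G) : g.s a ∈ g.unitSpace := ⟨g.inv a, g.r_inv a⟩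

lemma ck_r_mem (a : G) : g.r a ∈ g.unitSpace := ⟨a, rfl⟩

lemma ck_inv_unit {u : G} (hu : u ∈ g.unitSpace) : g.inv u = u := by
  have h2 : g.mul (g.inv u) (g.s (g.inv u)) = g.inv u := g.mul_unit _
  rw [g.s_inv, ck_r_unit g hu] at h2
  have h3 : g.mul (g.inv u) u = g.s u := g.inv_mul u
  rw [h2, ck_s_unit g hu] at h3
  exact h3

lemma ck_unitSpace_open (hs : g.SourceEtale) : IsOpen g.unitSpace := by
  rw [isOpen_iff_forall_mem_open]
  intro u hu
  obtain ⟨U, hUo, huU, _, himg⟩ := hs u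
  refine ⟨g.s '' U, ?_, himg U subset_rfl hUo, ⟨u, huU, ck_s_unit g hu⟩⟩
  rintro z ⟨a, _, rfl⟩
  exact ck_s_mem g a

lemma ck_finsum_single {α : Type*} {M : Type*} [AddCommMonoid M] (F : α → M) (S : Set α)
    (a : α) (ha : a ∈ S) (h : ∀ x ∈ S, x ≠ a → F x = 0) : (∑ᶠ x ∈ S, F x) = F a := by
  rw [finsum_mem_def]
  rw [finsum_eq_single _ a]
  · exact Set.indicator_of_mem ha F
  · intro x hx
    by_cases hxS : x ∈ S
    · rw [Set.indicator_of_mem hxS, h x hxS hx]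
    · exact Set.indicator_of_notMem hxS F

lemma ck_conv_ind_left (K : Set G) (hK : K ⊆ g.unitSpace) (p : G → ℂ) :
    g.conv (EtaleGroupoid.ind K) p = fun γ => (EtaleGroupoid.ind K) (g.r γ) * p γ := by
  funext γ
  show (∑ᶠ α ∈ {α : G | g.r α = g.r γ}, EtaleGroupoid.ind K α * p (g.mul (g.inv α) γ)) = _
  rw [ck_finsum_single _ {α : G | g.r α = g.r γ} (g.r γ) (ck_r_unit g (ck_r_mem g γ))]
  · rw [ck_inv_unit g (ck_r_mem g γ), g.unit_mul γ]
  · intro x hx hne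
    have hxK : x ∉ K := fun hxK => hne ((ck_r_unit g (hK hxK)).symm.trans hx)
    rw [EtaleGroupoid.ind, Set.indicator_of_notMem hxK]
    exact zero_mul _

lemma ck_conv_ind_right (K : Set G) (hK : K ⊆ g.unitSpace) (p : G → ℂ) :
    g.conv p (EtaleGroupoid.ind K) = fun γ => p γ * (EtaleGroupoid.ind K) (g.s γ) := by
  funext γ
  show (∑ᶠ α ∈ {α : G | g.r α = g.r γ}, p α * EtaleGroupoid.ind K (g.mul (g.inv α) γ)) = _
  rw [ck_finsum_single _ {α : G | g.r α = g.r γ} γ rfl]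
  · rw [g.inv_mul γ]
  · intro x hx hne
    have hx' : g.r x = g.r γ := hx
    have hKz : g.mul (g.inv x) γ ∉ K := by
      intro hmem
      set β := g.mul (g.inv x) γ with hβ
      have hβu : β ∈ g.unitSpace := hK hmem
      have hrβ : g.r β = g.s x := by rw [hβ, g.r_mul _ _ (by rw [g.s_inv, hx']), g.r_inv]
      have hsx : g.s x = β := by rw [← hrβ, ck_r_unit g hβu]
      have hxβ : g.mul x β = γ := by
        rw [hβ, ← g.mul_assoc' x (g.inv x) γ (g.r_inv x).symm (by rw [g.s_inv, hx']),
          g.mul_inv, hx', g.unit_mul]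
      exact hne (by rw [← hxβ, ← hsx, g.mul_unit])
    rw [EtaleGroupoid.ind, Set.indicator_of_notMem hKz]
    exact mul_zero _

lemma ck_ind_mem {G : Type*} [TopologicalSpace G] [T2Space G] (K : Set G)
    (hKc : IsCompact K) (hKo : IsOpen K) : EtaleGroupoid.ind K ∈ (EtaleGroupoid.AG (G := G)) := by
  constructor
  · rw [IsLocallyConstant.iff_exists_open]
    intro x
    by_cases hx : x ∈ K
    · exact ⟨K, hKo, hx, fun y hy => by
        simp [EtaleGroupoid.ind, Set.indicator_of_mem, hy, hx]⟩
    · exact ⟨Kᶜ, hKc.isClosed.isOpen_compl, hx, fun y hy => by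
        rw [EtaleGroupoid.ind, Set.indicator_of_notMem hy, Set.indicator_of_notMem hx]⟩
  · exact HasCompactSupport.intro hKc fun x hx =>
      Set.indicator_of_notMem hx _

end CKaux

namespace CKaux

lemma ck_finsum_zero {α : Type*} {M : Type*} [AddCommMonoid M] (F : α → M) (S : Set α)
    (h : ∀ x ∈ S, F x = 0) : (∑ᶠ x ∈ S, F x) = 0 := by
  rw [finsum_mem_def]
  apply finsum_eq_zero_of_forall_eq_zero
  intro x
  by_cases hxS : x ∈ S
  · rw [Set.indicator_of_mem hxS, h x hxS]
  · exact Set.indicator_of_notMem hxS F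

end CKaux

open EtaleGroupoid CKaux in
/-- Cuntz–Krieger uniqueness: if the units with trivial isotropy are dense in the
unit space and `π : A(G) → B` is an algebra homomorphism with nonzero kernel, then
`π` kills the indicator of some nonempty compact open subset of the unit space. -/
theorem cuntz_krieger_uniqueness {G : Type*} [TopologicalSpace G] [T2Space G]
    [LocallyCompactSpace G] (g : EtaleGroupoid G) (hs : g.SourceEtale)
    (hu : g.UnitBasis)
    (hdense : g.unitSpace ⊆
      closure {u : G | u ∈ g.unitSpace ∧ ∀ γ : G, g.r γ = u → g.s γ = u → γ = u})
    {B : Type*} [Ring B] [Algebra ℂ B] (π : ↥(EtaleGroupoid.AG (G := G)) →ₗ[ℂ] B)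
    (hmul : ∀ f h : ↥(EtaleGroupoid.AG (G := G)), ∀ p : g.conv ↑f ↑h ∈ (EtaleGroupoid.AG (G := G)),
      π ⟨g.conv ↑f ↑h, p⟩ = π f * π h)
    (hker : ∃ f : ↥(EtaleGroupoid.AG (G := G)), f ≠ 0 ∧ π f = 0) :
    ∃ K : Set G, K.Nonempty ∧ IsCompact K ∧ IsOpen K ∧ K ⊆ g.unitSpace ∧
      ∀ p : EtaleGroupoid.ind K ∈ (EtaleGroupoid.AG (G := G)), π ⟨EtaleGroupoid.ind K, p⟩ = 0 := by
  classical
  obtain ⟨f, hf0, hfπ⟩ := hker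
  have : Nonempty G := by
    by_contra h
    exact hf0 (Subtype.ext (funext fun x => absurd ⟨x⟩ h))
  obtain ⟨hflc, hfcs⟩ := f.2
  obtain ⟨γ₀, hγ₀⟩ : ∃ γ₀, (f : G → ℂ) γ₀ ≠ 0 := by
    by_contra h
    push_neg at h
    exact hf0 (Subtype.ext (funext fun x => h x))
  set c : ℂ := (f : G → ℂ) γ₀ with hc
  obtain ⟨N, hNo, hγN, hNc⟩ := (IsLocallyConstant.iff_exists_open (f : G → ℂ)).1 hflc γ₀
  obtain ⟨U, hUo, hγU, hUinj, hUimg⟩ := hs γ₀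
  set V := U ∩ N with hV
  have hVo : IsOpen V := hUo.inter hNo
  have hVU : V ⊆ U := Set.inter_subset_left
  have hVinj : Set.InjOn g.s V := hUinj.mono hVU
  have hsVo : IsOpen (g.s '' V) := hUimg V hVU hVo
  have hγV : γ₀ ∈ V := ⟨hγU, hγN⟩
  have hx₀ : g.s γ₀ ∈ g.s '' V := ⟨γ₀, hγV, rfl⟩
  obtain ⟨W, hWc, hWo, hx₀W, hWsub, hWunit⟩ := hu (g.s γ₀) (ck_s_mem g γ₀) (g.s '' V) hsVo hx₀
  -- the local inverse of `s` on `V`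
  set τ : G → G := fun w => Function.invFunOn g.s V w with hτ
  have hτmem : ∀ w ∈ g.s '' V, τ w ∈ V := by
    rintro w ⟨v, hv, rfl⟩
    exact Function.invFunOn_mem ⟨v, hv, rfl⟩
  have hτs : ∀ w ∈ g.s '' V, g.s (τ w) = w := by
    rintro w ⟨v, hv, rfl⟩
    exact Function.invFunOn_eq ⟨v, hv, rfl⟩
  have hτeq : ∀ v ∈ V, τ (g.s v) = v := fun v hv =>
    hVinj (hτmem _ ⟨v, hv, rfl⟩) hv (hτs _ ⟨v, hv, rfl⟩)
  have hτcont : ContinuousOn τ (g.s '' V) := by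
    rw [continuousOn_iff']
    intro O hO
    refine ⟨g.s '' (O ∩ V), hUimg _ (Set.inter_subset_right.trans hVU) (hO.inter hVo), ?_⟩
    ext w
    constructor
    · rintro ⟨hτO, ⟨v, hv, rfl⟩⟩
      rw [Set.mem_preimage] at hτO
      rw [hτeq v hv] at hτO
      exact ⟨⟨v, ⟨hτO, hv⟩, rfl⟩, ⟨v, hv, rfl⟩⟩
    · rintro ⟨⟨v, ⟨hvO, hvV⟩, rfl⟩, _⟩
      refine ⟨?_, ⟨v, hvV, rfl⟩⟩
      rw [Set.mem_preimage, hτeq v hvV]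
      exact hvO
  -- the compact open "bisection" B
  set Bb : Set G := τ '' W with hBb
  have hBV : Bb ⊆ V := by
    rintro b ⟨w, hw, rfl⟩
    exact hτmem w (hWsub hw)
  have hBc : IsCompact Bb := hWc.image_of_continuousOn (hτcont.mono hWsub)
  have hsB : ∀ b ∈ Bb, g.s b ∈ W := by
    rintro b ⟨w, hw, rfl⟩
    rw [hτs w (hWsub hw)]
    exact hw
  have hsτ : ∀ w ∈ W, g.s (τ w) = w := fun w hw => hτs w (hWsub hw)
  -- the function gg = ind (inv '' B) ⋆ f
  set φ : G → G := fun γ => g.mul (τ (g.r γ)) γ with hφ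
  set gg : G → ℂ := (g.r ⁻¹' W).indicator (fun γ => (f : G → ℂ) (φ γ)) with hgg
  have hWcl : IsClosed W := hWc.isClosed
  have hφcont : ∀ x, g.r x ∈ W → ContinuousAt φ x := by
    intro x hx
    have hψ : ContinuousWithinAt (fun y => (τ (g.r y), y)) (g.r ⁻¹' W) x := by
      apply ContinuousWithinAt.prodMk
      · exact (hτcont (g.r x) (hWsub hx)).comp g.continuous_r.continuousWithinAt
          (fun y hy => hWsub hy)
      · exact continuousWithinAt_id
    have hmaps : Set.MapsTo (fun y => (τ (g.r y), y)) (g.r ⁻¹' W)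
        {p : G × G | g.s p.1 = g.r p.2} := fun y hy => hsτ (g.r y) hy
    have hpt : ((τ (g.r x), x) : G × G) ∈ {p : G × G | g.s p.1 = g.r p.2} := hsτ (g.r x) hx
    have hcw := ContinuousWithinAt.comp (f := fun y => (τ (g.r y), y))
      (g := fun p : G × G => g.mul p.1 p.2) (t := {p : G × G | g.s p.1 = g.r p.2})
      (g.continuous_mul _ hpt) hψ hmaps
    have hcw' : ContinuousWithinAt φ (g.r ⁻¹' W) x := hcw
    exact hcw'.continuousAt ((hWo.preimage g.continuous_r).mem_nhds hx)
  have hgglc : IsLocallyConstant gg := by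
    rw [IsLocallyConstant.iff_exists_open]
    intro x
    by_cases hx : g.r x ∈ W
    · obtain ⟨N2, hN2o, hφN2, hN2c⟩ :=
        (IsLocallyConstant.iff_exists_open (f : G → ℂ)).1 hflc (φ x)
      have h1 : φ ⁻¹' N2 ∈ nhds x := (hφcont x hx).preimage_mem_nhds (hN2o.mem_nhds hφN2)
      obtain ⟨O, hON, hOo, hxO⟩ := mem_nhds_iff.1 h1
      refine ⟨O ∩ g.r ⁻¹' W, hOo.inter (hWo.preimage g.continuous_r), ⟨hxO, hx⟩, ?_⟩
      rintro y ⟨hyO, hyW⟩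
      rw [hgg, Set.indicator_of_mem hyW, Set.indicator_of_mem (show x ∈ g.r ⁻¹' W from hx)]
      exact hN2c (φ y) (hON hyO)
    · refine ⟨g.r ⁻¹' Wᶜ, (hWcl.isOpen_compl).preimage g.continuous_r, hx, ?_⟩
      intro y hy
      rw [hgg, Set.indicator_of_notMem (show y ∉ g.r ⁻¹' W from hy), Set.indicator_of_notMem (show x ∉ g.r ⁻¹' W from hx)]
  have hggcs : HasCompactSupport gg := by
    have hB'c : IsCompact (g.inv '' Bb) := hBc.image g.continuous_inv
    have hPPc : IsCompact (((g.inv '' Bb) ×ˢ tsupport (f : G → ℂ)) ∩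
        {p : G × G | g.s p.1 = g.r p.2}) :=
      (hB'c.prod hfcs).inter_right
        (isClosed_eq (g.continuous_s.comp continuous_fst) (g.continuous_r.comp continuous_snd))
    have hMc : IsCompact ((fun p : G × G => g.mul p.1 p.2) ''
        (((g.inv '' Bb) ×ˢ tsupport (f : G → ℂ)) ∩ {p : G × G | g.s p.1 = g.r p.2})) :=
      hPPc.image_of_continuousOn (g.continuous_mul.mono (fun p hp => hp.2))
    apply HasCompactSupport.intro hMc
    intro x hx
    by_contra hgx
    apply hx
    have hrx : g.r x ∈ W := by
      by_contra hrx
      exact hgx (by rw [hgg, Set.indicator_of_notMem (show x ∉ g.r ⁻¹' W from hrx)])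
    have hfφ : (f : G → ℂ) (φ x) ≠ 0 := by
      intro h0
      exact hgx (by rw [hgg, Set.indicator_of_mem (show x ∈ g.r ⁻¹' W from hrx)]; exact h0)
    have hβB : τ (g.r x) ∈ Bb := ⟨g.r x, hrx, rfl⟩
    have hsβ : g.s (τ (g.r x)) = g.r x := hsτ _ hrx
    have hrφ : g.r (φ x) = g.r (τ (g.r x)) := g.r_mul _ _ hsβ
    refine ⟨(g.inv (τ (g.r x)), φ x), ⟨⟨⟨τ (g.r x), hβB, rfl⟩,
      subset_closure hfφ⟩, ?_⟩, ?_⟩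
    · show g.s (g.inv (τ (g.r x))) = g.r (φ x)
      rw [g.s_inv, hrφ]
    · show g.mul (g.inv (τ (g.r x))) (φ x) = x
      rw [hφ]
      show g.mul (g.inv (τ (g.r x))) (g.mul (τ (g.r x)) x) = x
      rw [← g.mul_assoc' _ _ _ (g.s_inv _) hsβ, g.inv_mul, hsβ, g.unit_mul]
  have hggmem : gg ∈ (EtaleGroupoid.AG (G := G)) := ⟨hgglc, hggcs⟩
  have hconvg : g.conv (EtaleGroupoid.ind (g.inv '' Bb)) (f : G → ℂ) = gg := by
    funext γ
    show (∑ᶠ α ∈ {α : G | g.r α = g.r γ},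
      EtaleGroupoid.ind (g.inv '' Bb) α * (f : G → ℂ) (g.mul (g.inv α) γ)) = gg γ
    by_cases hrγ : g.r γ ∈ W
    · have hβB : τ (g.r γ) ∈ Bb := ⟨g.r γ, hrγ, rfl⟩
      have hsβ : g.s (τ (g.r γ)) = g.r γ := hsτ _ hrγ
      have ha : g.inv (τ (g.r γ)) ∈ {α : G | g.r α = g.r γ} := by
        show g.r (g.inv (τ (g.r γ))) = g.r γ
        rw [g.r_inv, hsβ]
      have hz2 : ∀ x ∈ {α : G | g.r α = g.r γ}, x ≠ g.inv (τ (g.r γ)) →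
          EtaleGroupoid.ind (g.inv '' Bb) x * (f : G → ℂ) (g.mul (g.inv x) γ) = 0 := by
        intro x hxS hne
        have hxB' : x ∉ g.inv '' Bb := by
          rintro ⟨b, hbB, rfl⟩
          obtain ⟨w, hw, rfl⟩ := hbB
          have hrb : g.r (g.inv (τ w)) = w := by rw [g.r_inv, hsτ w hw]
          have hw' : w = g.r γ := by rw [← hrb]; exact hxS
          exact hne (by rw [hw'])
        rw [EtaleGroupoid.ind, Set.indicator_of_notMem hxB']
        exact zero_mul _
      rw [ck_finsum_single _ {α : G | g.r α = g.r γ} (g.inv (τ (g.r γ))) ha hz2]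
      have hmem : g.inv (τ (g.r γ)) ∈ g.inv '' Bb := ⟨τ (g.r γ), hβB, rfl⟩
      rw [EtaleGroupoid.ind, Set.indicator_of_mem hmem, Pi.one_apply, one_mul, g.inv_inv]
      rw [hgg, Set.indicator_of_mem (show γ ∈ g.r ⁻¹' W from hrγ)]
    · have hz : ∀ x ∈ {α : G | g.r α = g.r γ},
          EtaleGroupoid.ind (g.inv '' Bb) x * (f : G → ℂ) (g.mul (g.inv x) γ) = 0 := by
        intro x hxS
        have hxB' : x ∉ g.inv '' Bb := by
          rintro ⟨b, hbB, rfl⟩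
          obtain ⟨w, hw, rfl⟩ := hbB
          apply hrγ
          have hrb : g.r (g.inv (τ w)) = w := by rw [g.r_inv, hsτ w hw]
          have hxS' : g.r (g.inv (τ w)) = g.r γ := hxS
          rw [← hxS', hrb]
          exact hw
        rw [EtaleGroupoid.ind, Set.indicator_of_notMem hxB']
        exact zero_mul _
      rw [ck_finsum_zero _ _ hz, hgg, Set.indicator_of_notMem (show γ ∉ g.r ⁻¹' W from hrγ)]
  have hggW : ∀ w ∈ W, gg w = c := by
    intro w hw
    have hrw : g.r w = w := ck_r_unit g (hWunit hw)
    have : w ∈ g.r ⁻¹' W := by rw [Set.mem_preimage, hrw]; exact hw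
    rw [hgg, Set.indicator_of_mem this]
    have : φ w = τ w := by
      rw [hφ]
      show g.mul (τ (g.r w)) w = τ w
      rw [hrw]
      have h := g.mul_unit (τ w)
      rw [hsτ w hw] at h
      exact h
    rw [this]
    exact hNc (τ w) (hBV ⟨w, hw, rfl⟩).2
  -- a unit with trivial isotropy inside W
  obtain ⟨u₀, hu₀W, hu₀unit, hu₀iso⟩ :
      ∃ u₀ ∈ W, u₀ ∈ g.unitSpace ∧ ∀ γ : G, g.r γ = u₀ → g.s γ = u₀ → γ = u₀ := by
    have h1 := hdense (ck_s_mem g γ₀)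
    rw [mem_closure_iff] at h1
    obtain ⟨u₀, hu₀W, hu₀T⟩ := h1 W hWo hx₀W
    exact ⟨u₀, hu₀W, hu₀T.1, hu₀T.2⟩
  -- the compact set of non-units in the support of gg
  set D' : Set G := Function.support gg \ g.unitSpace with hD'
  have hD'c : IsCompact D' := by
    have hsupcl : IsClosed (Function.support gg) := by
      have : IsOpen (gg ⁻¹' {0}) := hgglc {0}
      have he : Function.support gg = (gg ⁻¹' {0})ᶜ := by
        ext x; simp [Function.mem_support]
      rw [he]
      exact this.isClosed_compl
    refine IsCompact.of_isClosed_subset hggcs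
      (hsupcl.inter (ck_unitSpace_open g hs).isClosed_compl) ?_
    exact fun x hx => subset_closure hx.1
  -- separation
  obtain ⟨P, hPo, hu₀P, hPW, hPsep⟩ :
      ∃ P : Set G, IsOpen P ∧ u₀ ∈ P ∧ P ⊆ W ∧ ∀ γ ∈ D', g.r γ ∉ P ∨ g.s γ ∉ P := by
    have hchoice : ∀ γ ∈ D', ∃ O Pp : Set G, IsOpen O ∧ γ ∈ O ∧ IsOpen Pp ∧ u₀ ∈ Pp ∧
        ∀ δ ∈ O, g.r δ ∉ Pp ∨ g.s δ ∉ Pp := by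
      intro γ hγ
      have hne : g.r γ ≠ u₀ ∨ g.s γ ≠ u₀ := by
        by_contra h
        push_neg at h
        have : γ = u₀ := hu₀iso γ h.1 h.2
        exact hγ.2 (this ▸ hu₀unit)
      rcases hne with hne | hne
      · obtain ⟨O1, O2, hO1, hO2, hm1, hm2, hdisj⟩ := t2_separation hne
        exact ⟨g.r ⁻¹' O1, O2, hO1.preimage g.continuous_r, hm1, hO2, hm2,
          fun δ hδ => Or.inl fun hP => Set.disjoint_left.mp hdisj hδ hP⟩
      · obtain ⟨O1, O2, hO1, hO2, hm1, hm2, hdisj⟩ := t2_separation hne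
        exact ⟨g.s ⁻¹' O1, O2, hO1.preimage g.continuous_s, hm1, hO2, hm2,
          fun δ hδ => Or.inr fun hP => Set.disjoint_left.mp hdisj hδ hP⟩
    choose O Pp hOo hγO hPpo hu₀Pp hprop using fun (i : ↥D') => hchoice i i.2
    have hcover : D' ⊆ ⋃ i : ↥D', O i := fun γ hγ => Set.mem_iUnion.2 ⟨⟨γ, hγ⟩, hγO _⟩
    obtain ⟨t, ht⟩ := hD'c.elim_finite_subcover O hOo hcover
    refine ⟨W ∩ ⋂ i ∈ t, Pp i, hWo.inter (isOpen_biInter_finset fun i _ => hPpo i),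
      ⟨hu₀W, Set.mem_iInter₂.2 fun i _ => hu₀Pp i⟩, Set.inter_subset_left, ?_⟩
    intro γ hγ
    obtain ⟨i, hit, hγO'⟩ := Set.mem_iUnion₂.1 (ht hγ)
    rcases hprop i γ hγO' with h | h
    · exact Or.inl fun hP => h (Set.mem_iInter₂.1 hP.2 i hit)
    · exact Or.inr fun hP => h (Set.mem_iInter₂.1 hP.2 i hit)
  obtain ⟨K, hKc, hKo, hu₀K, hKP, hKunit⟩ := hu u₀ hu₀unit P hPo hu₀P
  -- the key function identity
  have hfinal : g.conv (EtaleGroupoid.ind K) (g.conv gg (EtaleGroupoid.ind K))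
      = c • EtaleGroupoid.ind K := by
    rw [ck_conv_ind_right g K hKunit gg, ck_conv_ind_left g K hKunit]
    funext γ
    show EtaleGroupoid.ind K (g.r γ) * (gg γ * EtaleGroupoid.ind K (g.s γ))
      = (c • EtaleGroupoid.ind K) γ
    by_cases hγK : γ ∈ K
    · have hγu := hKunit hγK
      have hrγ : g.r γ = γ := ck_r_unit g hγu
      have hsγ : g.s γ = γ := ck_s_unit g hγu
      have h1 : EtaleGroupoid.ind K γ = 1 := by
        rw [EtaleGroupoid.ind, Set.indicator_of_mem hγK, Pi.one_apply]
      rw [hrγ, hsγ, hggW γ (hPW (hKP hγK)), Pi.smul_apply, h1, smul_eq_mul]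
      ring
    · have h0 : EtaleGroupoid.ind K γ = 0 := by
        rw [EtaleGroupoid.ind, Set.indicator_of_notMem hγK]
      rw [Pi.smul_apply, h0, smul_eq_mul, mul_zero]
      by_cases hgγ : gg γ = 0
      · rw [hgγ, zero_mul, mul_zero]
      · by_cases hγu : γ ∈ g.unitSpace
        · have hrγ : g.r γ = γ := ck_r_unit g hγu
          rw [hrγ, h0, zero_mul]
        · have hγD : γ ∈ D' := ⟨hgγ, hγu⟩
          rcases hPsep γ hγD with h | h
          · have hind : EtaleGroupoid.ind K (g.r γ) = 0 := by
              rw [EtaleGroupoid.ind, Set.indicator_of_notMem (fun hh => h (hKP hh))]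
            rw [hind, zero_mul]
          · have hind : EtaleGroupoid.ind K (g.s γ) = 0 := by
              rw [EtaleGroupoid.ind, Set.indicator_of_notMem (fun hh => h (hKP hh))]
            rw [hind, mul_zero, mul_zero]
  -- membership facts
  have hindlc : ∀ (L : Set G), IsCompact L → IsOpen L → IsLocallyConstant (EtaleGroupoid.ind L) :=
    fun L h1 h2 => (ck_ind_mem L h1 h2).1
  have hB'o : IsOpen (g.inv '' Bb) := by
    have hBbeq : Bb = V ∩ g.s ⁻¹' W := by
      ext b
      constructor
      · rintro ⟨w, hw, rfl⟩
        exact ⟨hτmem w (hWsub hw), by rw [Set.mem_preimage, hsτ w hw]; exact hw⟩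
      · rintro ⟨hbV, hbW⟩
        exact ⟨g.s b, hbW, hτeq b hbV⟩
    have hBbo : IsOpen Bb := by
      rw [hBbeq]
      exact hVo.inter (hWo.preimage g.continuous_s)
    have : g.inv '' Bb = g.inv ⁻¹' Bb := by
      ext x
      constructor
      · rintro ⟨b, hb, rfl⟩
        rw [Set.mem_preimage, g.inv_inv]
        exact hb
      · intro hx
        exact ⟨g.inv x, hx, g.inv_inv x⟩
    rw [this]
    exact hBbo.preimage g.continuous_inv
  have hB'mem : EtaleGroupoid.ind (g.inv '' Bb) ∈ (EtaleGroupoid.AG (G := G)) :=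
    ck_ind_mem _ (hBc.image g.continuous_inv) hB'o
  have hKmem : EtaleGroupoid.ind K ∈ (EtaleGroupoid.AG (G := G)) := ck_ind_mem K hKc hKo
  have he1 : g.conv gg (EtaleGroupoid.ind K) = gg * ((EtaleGroupoid.ind K) ∘ g.s) :=
    ck_conv_ind_right g K hKunit gg
  have he1mem : g.conv gg (EtaleGroupoid.ind K) ∈ (EtaleGroupoid.AG (G := G)) := by
    rw [he1]
    exact ⟨hgglc.mul ((hindlc K hKc hKo).comp_continuous g.continuous_s),
      hggcs.mul_right⟩
  have he2 : g.conv (EtaleGroupoid.ind K) (g.conv gg (EtaleGroupoid.ind K))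
      = ((EtaleGroupoid.ind K) ∘ g.r) * (g.conv gg (EtaleGroupoid.ind K)) :=
    ck_conv_ind_left g K hKunit _
  have he2mem : g.conv (EtaleGroupoid.ind K) (g.conv gg (EtaleGroupoid.ind K))
      ∈ (EtaleGroupoid.AG (G := G)) := by
    rw [he2, he1]
    exact ⟨((hindlc K hKc hKo).comp_continuous g.continuous_r).mul
      (hgglc.mul ((hindlc K hKc hKo).comp_continuous g.continuous_s)),
      (hggcs.mul_right).mul_left⟩
  -- the algebraic chain
  refine ⟨K, ⟨u₀, hu₀K⟩, hKc, hKo, hKunit, ?_⟩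
  intro pK
  have hπgg : π ⟨gg, hggmem⟩ = 0 := by
    have hm : g.conv (EtaleGroupoid.ind (g.inv '' Bb)) (f : G → ℂ)
        ∈ (EtaleGroupoid.AG (G := G)) := by rw [hconvg]; exact hggmem
    have h1 := hmul ⟨EtaleGroupoid.ind (g.inv '' Bb), hB'mem⟩ f hm
    have h2 : (⟨g.conv (EtaleGroupoid.ind (g.inv '' Bb)) (f : G → ℂ), hm⟩ :
        ↥(EtaleGroupoid.AG (G := G))) = ⟨gg, hggmem⟩ := Subtype.ext hconvg
    rw [h2, hfπ, mul_zero] at h1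
    exact h1
  have hπq1 : π ⟨g.conv gg (EtaleGroupoid.ind K), he1mem⟩ = 0 := by
    have h1 := hmul ⟨gg, hggmem⟩ ⟨EtaleGroupoid.ind K, hKmem⟩ he1mem
    rw [hπgg, zero_mul] at h1
    exact h1
  have h1 := hmul ⟨EtaleGroupoid.ind K, hKmem⟩ ⟨g.conv gg (EtaleGroupoid.ind K), he1mem⟩ he2mem
  rw [hπq1, mul_zero] at h1
  have h2 : (⟨g.conv (EtaleGroupoid.ind K) (g.conv gg (EtaleGroupoid.ind K)), he2mem⟩ :
      ↥(EtaleGroupoid.AG (G := G))) = c • ⟨EtaleGroupoid.ind K, pK⟩ := Subtype.ext hfinal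
  rw [h2, map_smul, smul_eq_zero] at h1
  rcases h1 with h1 | h1
  · exact absurd h1 hγ₀
  · exact h1
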